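/- Let K be a totally real number field that is Galois over ℚ, let 𝔩_1, …, 𝔩_r be finitely many nonzero prime ideals of the ring of integers O_K, each of odd residue characteristic, and let p be an odd rational prime, coprime to the residue characteristics of the 𝔩_i, that splits completely in K(√−1). Let 𝔭 be a prime of O_K lying over p. Then there exists a totally positive element α ∈ O_K such that: (i) ℚ(α) = K; (ii) for each i, the polynomial X² + α is irreducible in (O_K/𝔩_i)[X]; (iii) X² + α is irreducible in (O_K/𝔭)[X]; and (iv) for every σ ∈ Gal(K/ℚ) with σ ≠ id, the polynomial X² + α splits in (O_K/σ(𝔭))[X]. -/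

import Mathlib

open Polynomial NumberField UniqueFactorizationMonoid

section Aux

set_option linter.unusedSectionVars false

variable {K : Type} [Field K] [NumberField K] [IsGalois ℚ K]

/-- Restriction of a Galois automorphism to the ring of integers, as a ring hom. -/
noncomputable abbrev sres (σ : K ≃ₐ[ℚ] K) :
    NumberField.RingOfIntegers K →+* NumberField.RingOfIntegers K :=
  ((galRestrict ℤ ℚ K (NumberField.RingOfIntegers K) σ :
      NumberField.RingOfIntegers K ≃ₐ[ℤ] NumberField.RingOfIntegers K) :
    NumberField.RingOfIntegers K →+* NumberField.RingOfIntegers K)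

lemma sres_coe (σ : K ≃ₐ[ℚ] K) (x : 𝓞 K) :
    (algebraMap (𝓞 K) K) (sres σ x) = σ (algebraMap (𝓞 K) K x) :=
  algebraMap_galRestrict_apply ℤ σ x

lemma sres_one (x : 𝓞 K) : sres (1 : K ≃ₐ[ℚ] K) x = x := by
  have h := map_one (galRestrict ℤ ℚ K (𝓞 K))
  simp only [sres, h]
  rfl

lemma sres_mul (σ τ : K ≃ₐ[ℚ] K) (x : 𝓞 K) : sres (σ * τ) x = sres σ (sres τ x) := by
  have h := map_mul (galRestrict ℤ ℚ K (𝓞 K)) σ τ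
  simp only [sres, h]
  rfl

lemma map_sres_one (I : Ideal (𝓞 K)) : Ideal.map (sres (K := K) 1) I = I := by
  have : sres (K := K) 1 = RingHom.id (𝓞 K) := RingHom.ext fun x => sres_one x
  rw [this, Ideal.map_id]

lemma map_sres_mul (σ τ : K ≃ₐ[ℚ] K) (I : Ideal (𝓞 K)) :
    Ideal.map (sres σ) (Ideal.map (sres τ) I) = Ideal.map (sres (σ * τ)) I := by
  rw [Ideal.map_map]
  congr 1
  exact RingHom.ext fun x => (sres_mul σ τ x).symm

lemma map_sres_eq_comap (σ : K ≃ₐ[ℚ] K) (I : Ideal (𝓞 K)) :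
    Ideal.map (sres σ) I = Ideal.comap (sres σ⁻¹) I := by
  refine le_antisymm (Ideal.map_le_iff_le_comap.mpr fun y hy => ?_) (fun x hx => ?_)
  · show sres σ⁻¹ (sres σ y) ∈ I
    rw [← sres_mul, inv_mul_cancel, sres_one]
    exact hy
  · have hx' : sres σ⁻¹ x ∈ I := hx
    have h := Ideal.mem_map_of_mem (sres σ) hx'
    rwa [← sres_mul, mul_inv_cancel, sres_one] at h

lemma map_sres_isPrime (σ : K ≃ₐ[ℚ] K) (I : Ideal (𝓞 K)) [I.IsPrime] :
    (Ideal.map (sres σ) I).IsPrime := by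
  rw [map_sres_eq_comap]
  exact Ideal.IsPrime.comap _

lemma map_sres_ne_bot (σ : K ≃ₐ[ℚ] K) (I : Ideal (𝓞 K)) (hI : I ≠ ⊥) :
    Ideal.map (sres σ) I ≠ ⊥ := by
  intro h
  apply hI
  rw [← map_sres_one (K := K) I, ← inv_mul_cancel σ, ← map_sres_mul, h, Ideal.map_bot]

lemma map_sres_natCast_mem (σ : K ≃ₐ[ℚ] K) (I : Ideal (𝓞 K)) (n : ℕ) (hn : (n : 𝓞 K) ∈ I) :
    (n : 𝓞 K) ∈ Ideal.map (sres σ) I := by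
  have := Ideal.mem_map_of_mem (sres σ) hn
  rwa [map_natCast] at this


section EF

variable {K M : Type} [Field K] [NumberField K] [IsGalois ℚ K]
  [Field M] [NumberField M] [Algebra K M]

lemma span_p_maximal (p : ℕ) (hp : p.Prime) : (Ideal.span {(p : ℤ)}).IsMaximal :=
  PrincipalIdealRing.isMaximal_of_irreducible (Nat.prime_iff_prime_int.mp hp).irreducible

lemma span_p_ne_bot (p : ℕ) (hp : p.Prime) : (Ideal.span {(p : ℤ)}) ≠ ⊥ := by
  rw [Ne, Ideal.span_singleton_eq_bot]
  exact_mod_cast hp.ne_zero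

lemma comap_eq_span_p (p : ℕ) (hp : p.Prime) (P : Ideal (𝓞 K)) (hP : P.IsPrime)
    (hPp : (p : 𝓞 K) ∈ P) :
    Ideal.comap (algebraMap ℤ (𝓞 K)) P = Ideal.span {(p : ℤ)} := by
  refine ((span_p_maximal p hp).eq_of_le (Ideal.comap_ne_top _ hP.ne_top) ?_).symm
  rw [Ideal.span_le, Set.singleton_subset_iff]
  show algebraMap ℤ (𝓞 K) (p : ℤ) ∈ P
  rw [map_natCast]
  exact hPp

lemma ef_one (p : ℕ) (hp : p.Prime)
    (hsplit : ∀ Q : Ideal (NumberField.RingOfIntegers M), Q.IsPrime → Q ≠ ⊥ →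
      (p : NumberField.RingOfIntegers M) ∈ Q →
      Ideal.ramificationIdx'
          (Ideal.span {(p : ℤ)}) Q = 1 ∧
      Ideal.inertiaDeg'
          (Ideal.span {(p : ℤ)}) Q = 1)
    (P : Ideal (𝓞 K)) (hP : P.IsPrime) (hPb : P ≠ ⊥) (hPp : (p : 𝓞 K) ∈ P) :
    Ideal.ramificationIdx' (Ideal.span {(p : ℤ)}) P = 1 ∧
    Ideal.inertiaDeg' (Ideal.span {(p : ℤ)}) P = 1 := by
  haveI := hP
  have hinj : Function.Injective (algebraMap (𝓞 K) (𝓞 M)) := by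
    intro x y h
    apply NumberField.RingOfIntegers.ext
    apply (algebraMap K M).injective
    have hx : (algebraMap (𝓞 K) (𝓞 M) x : M) = algebraMap K M (x : K) := rfl
    have hy : (algebraMap (𝓞 K) (𝓞 M) y : M) = algebraMap K M (y : K) := rfl
    rw [← hx, ← hy, h]
  have hker : RingHom.ker (algebraMap (𝓞 K) (𝓞 M)) = ⊥ :=
    (RingHom.injective_iff_ker_eq_bot _).mp hinj
  obtain ⟨Q, hQge, hQprime, hQcomap⟩ :=
    Ideal.exists_ideal_over_prime_of_isIntegral P (⊥ : Ideal (𝓞 M))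
      (by rw [← RingHom.ker_eq_comap_bot, hker]; exact bot_le)
  haveI := hQprime
  have hQb : Q ≠ ⊥ := by
    intro h
    apply hPb
    rw [← hQcomap, h, ← RingHom.ker_eq_comap_bot, hker]
  have hQp : (p : 𝓞 M) ∈ Q := by
    have : algebraMap (𝓞 K) (𝓞 M) (p : 𝓞 K) ∈ Q := by
      rw [← hQcomap] at hPp; exact hPp
    rwa [map_natCast] at this
  obtain ⟨heM, hfM⟩ := hsplit Q hQprime hQb hQp
  haveI hmax : (Ideal.span {(p : ℤ)}).IsMaximal := span_p_maximal p hp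
  haveI hPmax : P.IsMaximal := hP.isMaximal hPb
  have hintinj : Function.Injective (algebraMap ℤ (𝓞 M)) := RingHom.injective_int _
  have hg0 : Ideal.map (algebraMap (𝓞 K) (𝓞 M)) P ≠ ⊥ := by
    rwa [Ne, Ideal.map_eq_bot_iff_of_injective hinj]
  have hfg : Ideal.map (algebraMap ℤ (𝓞 M)) (Ideal.span {(p : ℤ)}) ≠ ⊥ := by
    rw [Ne, Ideal.map_eq_bot_iff_of_injective hintinj]
    exact span_p_ne_bot p hp
  have hg : Ideal.map (algebraMap (𝓞 K) (𝓞 M)) P ≤ Q :=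
    Ideal.map_le_iff_le_comap.mpr hQcomap.ge
  have he := Ideal.ramificationIdx_algebra_tower (R := ℤ) (S := 𝓞 K) (T := 𝓞 M)
    (p := Ideal.span {(p : ℤ)}) (P := P) (Q := Q) hg0 hfg hg
  rw [heM] at he
  haveI hPlies : P.LiesOver (Ideal.span {(p : ℤ)}) :=
    ⟨(comap_eq_span_p p hp P hP hPp).symm⟩
  haveI hQlies : Q.LiesOver P := ⟨hQcomap.symm⟩
  have hf := Ideal.inertiaDeg_algebra_tower (R := ℤ) (S := 𝓞 K) (T := 𝓞 M)
    (Ideal.span {(p : ℤ)}) P Q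
  rw [hfM] at hf
  exact ⟨Nat.eq_one_of_mul_eq_one_right he.symm, Nat.eq_one_of_mul_eq_one_right hf.symm⟩


lemma galois_transitive (p : ℕ) (hp : p.Prime)
    (𝔭 : Ideal (𝓞 K)) (h𝔭prime : 𝔭.IsPrime) (h𝔭bot : 𝔭 ≠ ⊥) (h𝔭p : (p : 𝓞 K) ∈ 𝔭)
    (Q : Ideal (𝓞 K)) (hQ : Q.IsPrime) (hQb : Q ≠ ⊥) (hQp : (p : 𝓞 K) ∈ Q) :
    ∃ σ : K ≃ₐ[ℚ] K, Ideal.map (sres σ) 𝔭 = Q := by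
  haveI := h𝔭prime
  haveI := hQ
  by_contra hcon
  push_neg at hcon
  have hQmax : Q.IsMaximal := hQ.isMaximal hQb
  have hmapprime : ∀ σ : K ≃ₐ[ℚ] K, (Ideal.map (sres σ) 𝔭).IsPrime :=
    fun σ => map_sres_isPrime σ 𝔭
  have hnotle : ∀ σ : K ≃ₐ[ℚ] K, ¬ (Q ≤ Ideal.map (sres σ) 𝔭) := by
    intro σ hle
    exact hcon σ (hQmax.eq_of_le (hmapprime σ).ne_top hle).symm
  have hsub := Ideal.subset_union_prime (R := 𝓞 K) (s := Finset.univ)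
      (f := fun σ : K ≃ₐ[ℚ] K => Ideal.map (sres σ) 𝔭) 1 1
      (fun σ _ _ _ => hmapprime σ) (I := Q)
  have hnex : ¬ ∃ σ ∈ (Finset.univ : Finset (K ≃ₐ[ℚ] K)), Q ≤ Ideal.map (sres σ) 𝔭 := by
    rintro ⟨σ, -, hle⟩
    exact hnotle σ hle
  obtain ⟨x, hxQ, hxU⟩ := Set.not_subset.mp (fun hss => hnex (hsub.mp hss))
  have hx : ∀ σ : K ≃ₐ[ℚ] K, x ∉ Ideal.map (sres σ) 𝔭 := by
    intro σ hmem
    exact hxU (Set.mem_biUnion (Finset.mem_coe.mpr (Finset.mem_univ σ)) hmem)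
  set N : 𝓞 K := ∏ σ : K ≃ₐ[ℚ] K, sres σ x with hN
  have hNQ : N ∈ Q := Ideal.IsPrime.prod_mem_iff.mpr ⟨1, Finset.mem_univ 1, by
    rw [sres_one]; exact hxQ⟩
  have hfixed : ∀ τ : K ≃ₐ[ℚ] K, sres τ N = N := by
    intro τ
    rw [hN, map_prod]
    calc ∏ σ : K ≃ₐ[ℚ] K, sres τ (sres σ x)
        = ∏ σ : K ≃ₐ[ℚ] K, sres (τ * σ) x := by
          refine Finset.prod_congr rfl fun σ _ => (sres_mul τ σ x).symm
      _ = ∏ σ : K ≃ₐ[ℚ] K, sres σ x :=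
          Fintype.prod_equiv (Equiv.mulLeft τ) _ _ (fun σ => rfl)
  have hfixedK : ∀ τ : K ≃ₐ[ℚ] K, τ (algebraMap (𝓞 K) K N) = algebraMap (𝓞 K) K N := by
    intro τ
    rw [← sres_coe, hfixed τ]
  have hbotmem : (algebraMap (𝓞 K) K N) ∈ (⊥ : IntermediateField ℚ K) := by
    have htop := (IsGalois.tfae.out 0 1).mp (inferInstance : IsGalois ℚ K)
    rw [← htop]
    exact fun g => hfixedK g
  obtain ⟨q, hq⟩ := IntermediateField.mem_bot.mp hbotmem
  have hqint : IsIntegral ℤ q := by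
    have hNint : IsIntegral ℤ (algebraMap (𝓞 K) K N) := NumberField.RingOfIntegers.isIntegral_coe N
    rw [← hq] at hNint
    exact (isIntegral_algebraMap_iff ((algebraMap ℚ K).injective)).mp hNint
  obtain ⟨m, hm⟩ := IsIntegrallyClosed.isIntegral_iff.mp hqint
  have hNm : N = ((m : ℤ) : 𝓞 K) := by
    apply NumberField.RingOfIntegers.ext
    show algebraMap (𝓞 K) K N = _
    rw [← hq, ← hm, ← IsScalarTower.algebraMap_apply]
    push_cast
    rfl
  have hmQ : algebraMap ℤ (𝓞 K) m ∈ Q := by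
    rw [eq_intCast, ← hNm]
    exact hNQ
  have hcomap : Ideal.comap (algebraMap ℤ (𝓞 K)) Q = Ideal.span {(p : ℤ)} :=
    comap_eq_span_p p hp Q hQ hQp
  have hpm : (p : ℤ) ∣ m := by
    have : m ∈ Ideal.span {(p : ℤ)} := by rw [← hcomap]; exact hmQ
    exact Ideal.mem_span_singleton.mp this
  obtain ⟨k, hk⟩ := hpm
  have hN𝔭 : N ∈ 𝔭 := by
    rw [hNm, hk]
    push_cast
    exact Ideal.mul_mem_right _ _ h𝔭p
  obtain ⟨σ, -, hσ⟩ := Ideal.IsPrime.prod_mem_iff.mp hN𝔭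
  apply hx σ⁻¹
  have h := Ideal.mem_map_of_mem (sres σ⁻¹) hσ
  rwa [← sres_mul, inv_mul_cancel, sres_one] at h

set_option maxHeartbeats 1000000 in
lemma decomp_trivial (p : ℕ) (hp : p.Prime)
    (hsplit : ∀ Q : Ideal (NumberField.RingOfIntegers M), Q.IsPrime → Q ≠ ⊥ →
      (p : NumberField.RingOfIntegers M) ∈ Q →
      Ideal.ramificationIdx'
          (Ideal.span {(p : ℤ)}) Q = 1 ∧
      Ideal.inertiaDeg'
          (Ideal.span {(p : ℤ)}) Q = 1)
    (𝔭 : Ideal (𝓞 K)) (h𝔭prime : 𝔭.IsPrime) (h𝔭bot : 𝔭 ≠ ⊥) (h𝔭p : (p : 𝓞 K) ∈ 𝔭) :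
    ∀ σ : K ≃ₐ[ℚ] K, Ideal.map (sres σ) 𝔭 = 𝔭 → σ = 1 := by
  classical
  haveI := h𝔭prime
  haveI hmax : (Ideal.span {(p : ℤ)}).IsMaximal := span_p_maximal p hp
  have hintinj : Function.Injective (algebraMap ℤ (𝓞 K)) := RingHom.injective_int _
  have hmapbot : Ideal.map (algebraMap ℤ (𝓞 K)) (Ideal.span {(p : ℤ)}) ≠ ⊥ := by
    rw [Ne, Ideal.map_eq_bot_iff_of_injective hintinj]
    exact span_p_ne_bot p hp
  set Sp := (factors (Ideal.map (algebraMap ℤ (𝓞 K)) (Ideal.span {(p : ℤ)}))).toFinset with hSp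
  have hpmem : (p : 𝓞 K) ∈ Ideal.map (algebraMap ℤ (𝓞 K)) (Ideal.span {(p : ℤ)}) := by
    have : algebraMap ℤ (𝓞 K) (p : ℤ) ∈ Ideal.map (algebraMap ℤ (𝓞 K)) (Ideal.span {(p : ℤ)}) :=
      Ideal.mem_map_of_mem _ (Ideal.subset_span rfl)
    rwa [map_natCast] at this
  have hmemS : ∀ P : Ideal (𝓞 K), P.IsPrime → P ≠ ⊥ → (p : 𝓞 K) ∈ P → P ∈ Sp := by
    intro P hP hPb hPp
    have hdvd : P ∣ Ideal.map (algebraMap ℤ (𝓞 K)) (Ideal.span {(p : ℤ)}) := by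
      rw [Ideal.dvd_iff_le, Ideal.map_span]
      rw [Ideal.span_le]
      rintro y ⟨z, hz, rfl⟩
      rw [Set.mem_singleton_iff] at hz
      subst hz
      rw [map_natCast]
      exact hPp
    obtain ⟨q, hq, hassoc⟩ := exists_mem_factors_of_dvd hmapbot
      (Ideal.prime_of_isPrime hPb hP).irreducible hdvd
    rw [Multiset.mem_toFinset]
    rwa [associated_iff_eq.mp hassoc]
  have hSfacts : ∀ P ∈ Sp, P.IsPrime ∧ P ≠ ⊥ ∧ (p : 𝓞 K) ∈ P := by
    intro P hP
    have hmem := Multiset.mem_toFinset.mp hP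
    have hprime : Prime P := prime_of_factor P hmem
    refine ⟨Ideal.isPrime_of_prime hprime, hprime.ne_zero, ?_⟩
    have hdvd := dvd_of_mem_factors hmem
    exact Ideal.le_of_dvd hdvd hpmem
  have hsum := Ideal.sum_ramification_inertia (𝓞 K) ℚ K (p := Ideal.span {(p : ℤ)})
      (span_p_ne_bot p hp)
  have hcard : Sp.card = Module.finrank ℚ K := by
    rw [← hsum]
    rw [Finset.card_eq_sum_ones]
    refine Finset.sum_congr rfl fun P hP => ?_
    obtain ⟨h1, h2, h3⟩ := hSfacts P hP
    obtain ⟨he, hf⟩ := ef_one (M := M) p hp hsplit P h1 h2 h3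
    rw [he, hf]
  have hg : ∀ σ : K ≃ₐ[ℚ] K, Ideal.map (sres σ) 𝔭 ∈ Sp := by
    intro σ
    exact hmemS _ (map_sres_isPrime σ 𝔭) (map_sres_ne_bot σ 𝔭 h𝔭bot)
      (map_sres_natCast_mem σ 𝔭 p h𝔭p)
  set g : (K ≃ₐ[ℚ] K) → {x // x ∈ Sp} := fun σ => ⟨Ideal.map (sres σ) 𝔭, hg σ⟩ with hgdef
  have hgsurj : Function.Surjective g := by
    rintro ⟨Q, hQ⟩
    obtain ⟨h1, h2, h3⟩ := hSfacts Q hQ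
    obtain ⟨σ, hσ⟩ := galois_transitive p hp 𝔭 h𝔭prime h𝔭bot h𝔭p Q h1 h2 h3
    exact ⟨σ, Subtype.ext hσ⟩
  have hcards : Fintype.card (K ≃ₐ[ℚ] K) = Fintype.card {x // x ∈ Sp} := by
    rw [Fintype.card_coe, hcard]
    rw [← Nat.card_eq_fintype_card]
    exact IsGalois.card_aut_eq_finrank ℚ K
  have hgbij : Function.Bijective g :=
    (Fintype.bijective_iff_surjective_and_card g).mpr ⟨hgsurj, hcards⟩
  intro σ hσ
  apply hgbij.1
  apply Subtype.ext
  show Ideal.map (sres σ) 𝔭 = Ideal.map (sres 1) 𝔭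
  rw [hσ, map_sres_one]

end EF

end Aux


set_option synthInstance.maxHeartbeats 1000000 in
set_option maxHeartbeats 1000000 in
/-- Let `K` be a totally real number field, Galois over `ℚ`; let
`𝔩 0, …, 𝔩 (r-1)` be nonzero primes of `𝓞 K` of odd residue characteristic (i.e. `2 ∉ 𝔩 i`);
let `p` be an odd rational prime, coprime to the residue characteristics of the `𝔩 i`
(i.e. `p ∉ 𝔩 i`), which splits completely in `K(√−1)` (here `M = K(j)` with `j² = −1`:
every nonzero prime of `𝓞 M` above `p` has ramification index and residue degree `1` over
`ℤ`); and let `𝔭` be a prime of `𝓞 K` over `p`. Then there is a totally positive `α ∈ 𝓞 K`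
with: (i) `ℚ(α) = K`; (ii) `X² + α` is irreducible mod each `𝔩 i`; (iii) `X² + α` is
irreducible mod `𝔭`; (iv) for every `σ ≠ id` in `Gal(K/ℚ)`, `X² + α` splits into linear
factors mod `σ(𝔭)`. -/
theorem stmt_9 (K : Type) [Field K] [NumberField K] [IsGalois ℚ K]
    (hKreal : ∀ ψ : K →+* ℂ, ∀ x, (ψ x).im = 0)
    (r : ℕ) (𝔩 : Fin r → Ideal (NumberField.RingOfIntegers K))
    (h𝔩prime : ∀ i, (𝔩 i).IsPrime) (h𝔩bot : ∀ i, 𝔩 i ≠ ⊥)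
    (h𝔩odd : ∀ i, (2 : NumberField.RingOfIntegers K) ∉ 𝔩 i)
    (p : ℕ) (hp : p.Prime) (hpodd : Odd p)
    (hpcop : ∀ i, (p : NumberField.RingOfIntegers K) ∉ 𝔩 i)
    (M : Type) [Field M] [NumberField M] [Algebra K M]
    (j : M) (hj : j ^ 2 = -1) (hM : IntermediateField.adjoin K {j} = ⊤)
    (hsplit : ∀ Q : Ideal (NumberField.RingOfIntegers M), Q.IsPrime → Q ≠ ⊥ →
      (p : NumberField.RingOfIntegers M) ∈ Q →
      Ideal.ramificationIdx'
          (Ideal.span {(p : ℤ)}) Q = 1 ∧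
      Ideal.inertiaDeg'
          (Ideal.span {(p : ℤ)}) Q = 1)
    (𝔭 : Ideal (NumberField.RingOfIntegers K)) (h𝔭prime : 𝔭.IsPrime) (h𝔭bot : 𝔭 ≠ ⊥)
    (h𝔭p : (p : NumberField.RingOfIntegers K) ∈ 𝔭) :
    ∃ α : NumberField.RingOfIntegers K,
      (∀ ψ : K →+* ℝ, 0 < ψ (α : K)) ∧
      IntermediateField.adjoin ℚ {(α : K)} = ⊤ ∧
      (∀ i, Irreducible
        (X ^ 2 + C (Ideal.Quotient.mk (𝔩 i) α) :
          Polynomial (NumberField.RingOfIntegers K ⧸ 𝔩 i))) ∧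
      Irreducible
        (X ^ 2 + C (Ideal.Quotient.mk 𝔭 α) :
          Polynomial (NumberField.RingOfIntegers K ⧸ 𝔭)) ∧
      (∀ σ : K ≃ₐ[ℚ] K, σ ≠ 1 →
        ∃ a b : NumberField.RingOfIntegers K ⧸
            Ideal.map
              ((galRestrict ℤ ℚ K (NumberField.RingOfIntegers K) σ :
                  NumberField.RingOfIntegers K ≃ₐ[ℤ] NumberField.RingOfIntegers K) :
                NumberField.RingOfIntegers K →+* NumberField.RingOfIntegers K) 𝔭,
          (X ^ 2 + C (Ideal.Quotient.mk
              (Ideal.map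
                ((galRestrict ℤ ℚ K (NumberField.RingOfIntegers K) σ :
                    NumberField.RingOfIntegers K ≃ₐ[ℤ] NumberField.RingOfIntegers K) :
                  NumberField.RingOfIntegers K →+* NumberField.RingOfIntegers K) 𝔭) α)) =
            (X - C a) * (X - C b)) := by
  classical
  haveI := h𝔭prime
  -- notation
  set O := NumberField.RingOfIntegers K with hO
  set Pm : (K ≃ₐ[ℚ] K) → Ideal O := fun σ => Ideal.map (sres σ) 𝔭 with hPm
  have hPm1 : Pm 1 = 𝔭 := map_sres_one 𝔭
  have hPmprime : ∀ σ, (Pm σ).IsPrime := fun σ => map_sres_isPrime σ 𝔭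
  have hPmbot : ∀ σ, Pm σ ≠ ⊥ := fun σ => map_sres_ne_bot σ 𝔭 h𝔭bot
  have hPmp : ∀ σ, (p : O) ∈ Pm σ := fun σ => map_sres_natCast_mem σ 𝔭 p h𝔭p
  have hD : ∀ σ : K ≃ₐ[ℚ] K, Pm σ = 𝔭 → σ = 1 :=
    decomp_trivial (M := M) p hp hsplit 𝔭 h𝔭prime h𝔭bot h𝔭p
  -- 2 ∉ 𝔭
  have h2𝔭 : (2 : O) ∉ 𝔭 := by
    intro h2
    obtain ⟨k, hk⟩ := hpodd
    have h1 : (1 : O) ∈ 𝔭 := by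
      have : (1 : O) = (p : O) - 2 * (k : O) := by
        rw [hk]; push_cast; rw [Nat.cast_mul]; ring
      rw [this]
      exact Ideal.sub_mem _ h𝔭p (Ideal.mul_mem_right _ _ h2)
    exact h𝔭prime.ne_top ((Ideal.eq_top_iff_one _).mpr h1)
  -- existence of nonsquares
  have hns : ∀ I : Ideal O, I.IsPrime → I ≠ ⊥ → (2 : O) ∉ I →
      ∃ y : O, ¬ IsSquare (-(Ideal.Quotient.mk I y)) := by
    intro I hIp hIb h2
    haveI : I.IsMaximal := hIp.isMaximal hIb
    letI : Field (O ⧸ I) := Ideal.Quotient.field I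
    haveI : Finite (O ⧸ I) := by
      rw [← Ideal.absNorm_ne_zero_iff]
      rw [Ne, Ideal.absNorm_eq_zero_iff]
      exact hIb
    have hchar : ringChar (O ⧸ I) ≠ 2 := by
      intro h
      apply h2
      have h2' : ((2 : ℕ) : O ⧸ I) = 0 := by
        rw [← h]; exact ringChar.Nat.cast_ringChar
      have : Ideal.Quotient.mk I (2 : O) = 0 := by
        rw [map_ofNat]
        exact_mod_cast h2'
      exact Ideal.Quotient.eq_zero_iff_mem.mp this
    obtain ⟨c, hc⟩ := FiniteField.exists_nonsquare (F := O ⧸ I) hchar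
    obtain ⟨y, hy⟩ := Ideal.Quotient.mk_surjective (-c)
    exact ⟨y, by rw [hy, neg_neg]; exact hc⟩
  -- the target residues
  set t : Ideal O → O := fun I =>
    if h1 : ∃ σ : K ≃ₐ[ℚ] K, σ ≠ 1 ∧ I = Pm σ then 0
    else if h2 : ∃ y : O, ¬ IsSquare (-(Ideal.Quotient.mk I y)) then h2.choose else 0
    with ht
  have ht0 : ∀ σ : K ≃ₐ[ℚ] K, σ ≠ 1 → t (Pm σ) = 0 := by
    intro σ hσ
    rw [ht]
    exact dif_pos ⟨σ, hσ, rfl⟩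
  have htns : ∀ I : Ideal O, (¬ ∃ σ : K ≃ₐ[ℚ] K, σ ≠ 1 ∧ I = Pm σ) →
      (h2 : ∃ y : O, ¬ IsSquare (-(Ideal.Quotient.mk I y))) →
      ¬ IsSquare (-(Ideal.Quotient.mk I (t I))) := by
    intro I h1 h2
    rw [ht]
    simp only [dif_neg h1, dif_pos h2]
    exact h2.choose_spec
  -- the finite set of ideals
  set T : Finset (Ideal O) :=
    (Finset.image 𝔩 Finset.univ) ∪ (Finset.image Pm Finset.univ) with hT
  have hTfacts : ∀ I ∈ T, I.IsPrime ∧ I ≠ ⊥ := by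
    intro I hI
    rcases Finset.mem_union.mp hI with h | h
    · obtain ⟨i, -, rfl⟩ := Finset.mem_image.mp h
      exact ⟨h𝔩prime i, h𝔩bot i⟩
    · obtain ⟨σ, -, rfl⟩ := Finset.mem_image.mp h
      exact ⟨hPmprime σ, hPmbot σ⟩
  have h𝔩T : ∀ i, 𝔩 i ∈ T := fun i =>
    Finset.mem_union_left _ (Finset.mem_image_of_mem 𝔩 (Finset.mem_univ i))
  have hPmT : ∀ σ, Pm σ ∈ T := fun σ =>
    Finset.mem_union_right _ (Finset.mem_image_of_mem Pm (Finset.mem_univ σ))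
  have h𝔭T : 𝔭 ∈ T := hPm1 ▸ hPmT 1
  -- CRT
  obtain ⟨β, hβ⟩ := IsDedekindDomain.exists_forall_sub_mem_ideal (s := T)
    (fun I => I) (fun _ => 1)
    (fun I hI => Ideal.prime_of_isPrime (hTfacts I hI).2 (hTfacts I hI).1)
    (fun I _ J _ hIJ => hIJ) (fun I => t I.1)
  have hβmem : ∀ I ∈ T, β - t I ∈ I := by
    intro I hI
    have := hβ I hI
    rwa [pow_one] at this
  -- the positive shift
  set m : ℕ := ∏ I ∈ T, Ideal.absNorm I with hm
  have hm1 : 1 ≤ m := by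
    rw [Nat.one_le_iff_ne_zero, hm]
    rw [Finset.prod_ne_zero_iff]
    intro I hI
    rw [Ne, Ideal.absNorm_eq_zero_iff]
    exact (hTfacts I hI).2
  have hmI : ∀ I ∈ T, ((m : ℕ) : O) ∈ I := by
    intro I hI
    obtain ⟨k, hk⟩ := Finset.dvd_prod_of_mem Ideal.absNorm hI
    rw [← hm] at hk
    rw [hk]
    push_cast
    rw [show ((Ideal.absNorm I * k : ℕ) : O) = (Ideal.absNorm I : O) * (k : O) from Nat.cast_mul (α := 𝓞 K) _ _]
    exact Ideal.mul_mem_right _ _ (Ideal.absNorm_mem I)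
  haveI : Finite (K →+* ℂ) := Finite.of_fintype _
  obtain ⟨B, hB⟩ := Finite.exists_le (α := ℝ) (ι := (K →+* ℂ))
    (fun φ => |(φ (algebraMap O K β)).re|)
  obtain ⟨n, hn⟩ := exists_nat_gt B
  set α : O := β + ((n * m : ℕ) : O) with hα
  have hαβ : ∀ I ∈ T, Ideal.Quotient.mk I α = Ideal.Quotient.mk I (t I) := by
    intro I hI
    rw [Ideal.Quotient.mk_eq_mk_iff_sub_mem]
    have : α - t I = (β - t I) + ((n * m : ℕ) : O) := by rw [hα]; ring
    rw [this]
    refine Ideal.add_mem _ (hβmem I hI) ?_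
    have : ((n * m : ℕ) : O) = (n : O) * ((m : ℕ) : O) := by push_cast; exact Nat.cast_mul (α := 𝓞 K) _ _
    rw [this]
    exact Ideal.mul_mem_left _ _ (hmI I hI)
  -- irreducibility criterion
  have hirr : ∀ (I : Ideal O), I.IsMaximal → (¬ IsSquare (-(Ideal.Quotient.mk I α))) →
      Irreducible (X ^ 2 + C (Ideal.Quotient.mk I α) : Polynomial (O ⧸ I)) := by
    intro I hImax hsq
    haveI := hImax
    letI : Field (O ⧸ I) := Ideal.Quotient.field I
    have h2 : (X ^ 2 + C (Ideal.Quotient.mk I α) : Polynomial (O ⧸ I))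
        = X ^ 2 - C (-(Ideal.Quotient.mk I α)) := by rw [map_neg, sub_neg_eq_add]
    rw [h2]
    exact X_pow_sub_C_irreducible_of_prime Nat.prime_two
      (fun b hb => hsq ⟨b, by rw [← hb, pow_two]⟩)
  -- nonsquare conditions hold at 𝔩 i and 𝔭
  have hnot𝔩 : ∀ i, ¬ ∃ σ : K ≃ₐ[ℚ] K, σ ≠ 1 ∧ 𝔩 i = Pm σ := by
    rintro i ⟨σ, -, hEq⟩
    exact hpcop i (hEq ▸ hPmp σ)
  have hnot𝔭 : ¬ ∃ σ : K ≃ₐ[ℚ] K, σ ≠ 1 ∧ 𝔭 = Pm σ := by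
    rintro ⟨σ, hσ, hEq⟩
    exact hσ (hD σ hEq.symm)
  have hsq𝔩 : ∀ i, ¬ IsSquare (-(Ideal.Quotient.mk (𝔩 i) α)) := by
    intro i
    rw [hαβ _ (h𝔩T i)]
    exact htns _ (hnot𝔩 i) (hns _ (h𝔩prime i) (h𝔩bot i) (h𝔩odd i))
  have hsq𝔭 : ¬ IsSquare (-(Ideal.Quotient.mk 𝔭 α)) := by
    rw [hαβ _ h𝔭T]
    exact htns _ hnot𝔭 (hns _ h𝔭prime h𝔭bot h2𝔭)
  have hα𝔭 : α ∉ 𝔭 := by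
    intro hmem
    apply hsq𝔭
    rw [Ideal.Quotient.eq_zero_iff_mem.mpr hmem, neg_zero]
    exact ⟨0, by ring⟩
  refine ⟨α, ?_, ?_, ?_, ?_, ?_⟩
  · -- total positivity
    intro ψ
    have hcoe : (α : K) = algebraMap O K β + ((n * m : ℕ) : K) := by
      rw [NumberField.RingOfIntegers.coe_eq_algebraMap, hα, map_add, map_natCast]
    have hb : |((Complex.ofRealHom.comp ψ) (algebraMap O K β)).re| ≤ B :=
      hB (Complex.ofRealHom.comp ψ)
    have hb' : |ψ (algebraMap O K β)| ≤ B := by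
      simpa using hb
    have h1 : -B ≤ ψ (algebraMap O K β) := neg_le_of_abs_le hb'
    have h2 : (n : ℝ) * 1 ≤ (n : ℝ) * (m : ℝ) := by
      apply mul_le_mul_of_nonneg_left _ (Nat.cast_nonneg n)
      exact_mod_cast hm1
    have := hn
    rw [hcoe, map_add, map_natCast]
    push_cast
    nlinarith
  · -- ℚ(α) = K
    by_contra hne
    set F := IntermediateField.adjoin ℚ {(α : K)} with hF
    have hfixne : F.fixingSubgroup ≠ ⊥ := by
      intro hbot
      apply hne
      have h1 := IsGalois.fixedField_fixingSubgroup F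
      rw [hbot] at h1
      rw [← h1]
      refine eq_top_iff.mpr fun x _ => ?_
      rintro ⟨g, hg⟩
      rw [Subgroup.mem_bot] at hg
      subst hg
      rfl
    obtain ⟨σ, hσmem, hσne⟩ : ∃ σ ∈ F.fixingSubgroup, σ ≠ 1 := by
      by_contra hcon
      push_neg at hcon
      exact hfixne ((Subgroup.eq_bot_iff_forall _).mpr hcon)
    have hσα : σ (α : K) = (α : K) :=
      (IntermediateField.mem_fixingSubgroup_iff F σ).mp hσmem _
        (IntermediateField.mem_adjoin_simple_self ℚ ((α : K)))
    have hresα : sres σ α = α := by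
      apply NumberField.RingOfIntegers.ext
      show algebraMap O K (sres σ α) = algebraMap O K α
      rw [sres_coe]
      exact hσα
    have hσinv : σ⁻¹ ≠ 1 := fun h => hσne (by rwa [inv_eq_one] at h)
    have hmem : α ∈ Pm σ⁻¹ := by
      have h0 : Ideal.Quotient.mk (Pm σ⁻¹) α = 0 := by
        rw [hαβ _ (hPmT σ⁻¹), ht0 _ hσinv, map_zero]
      exact Ideal.Quotient.eq_zero_iff_mem.mp h0
    have : α ∈ 𝔭 := by
      have h := Ideal.mem_map_of_mem (sres σ) hmem
      rw [hresα] at h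
      rw [hPm] at h
      rw [map_sres_mul, mul_inv_cancel, map_sres_one] at h
      exact h
    exact hα𝔭 this
  · -- irreducible mod 𝔩 i
    intro i
    exact hirr _ ((h𝔩prime i).isMaximal (h𝔩bot i)) (hsq𝔩 i)
  · -- irreducible mod 𝔭
    exact hirr _ (h𝔭prime.isMaximal h𝔭bot) hsq𝔭
  · -- splits mod σ𝔭, σ ≠ 1
    intro σ hσ
    refine ⟨0, 0, ?_⟩
    have h0 : Ideal.Quotient.mk (Pm σ) α = 0 := by
      rw [hαβ _ (hPmT σ), ht0 _ hσ, map_zero]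
    show (X ^ 2 + C (Ideal.Quotient.mk (Pm σ) α) : Polynomial (O ⧸ Pm σ)) = _
    rw [h0, map_zero]
    ring
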